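/- arXiv:2406.10122 — 2 statements merged into one kernel-verified Lean document; each statement's English description precedes it below -/
import Mathlib

section
/- Let F be a flag in standard form in ℂ^n containing no hat vectors (i.e., every v_i is a standard basis vector). Then h·F = F for every invertible diagonal matrix h ∈ H, and F is the unique flag fixed by all of H lying in the orbit B·F, and also the unique flag fixed by all of H lying in the orbit B*·F. -/
/-
Common setup.  The ambient space is `ℂ^(n+1)` (so the paper's `n` is our `n + 1`,
and the paper's hypothesis `n ≥ 2` becomes `1 ≤ n`).  Coordinates are indexed by
`Fin (n+1)`, zero-indexed, so the paper's index `i ∈ {1, …, n}` is our `i - 1`,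
and the paper's `e_n` is `e (Fin.last n)`.
-/

noncomputable section

namespace ShareshianPairs

/-- The standard basis vector `e i` of `ℂ^(n+1)`. -/
def e (n : ℕ) (i : Fin (n + 1)) : Fin (n + 1) → ℂ := Pi.single i 1

/-- The hat vector `ê j = e j + e n`. -/
def hatE (n : ℕ) (j : Fin (n + 1)) : Fin (n + 1) → ℂ := e n j + e n (Fin.last n)

/-- The flag `(v 0 ⊂ v 1 ⊂ ⋯)` spanned by a sequence of vectors. -/
def flagOf (n : ℕ) (v : Fin (n + 1) → Fin (n + 1) → ℂ) :
    Fin (n + 1) → Submodule ℂ (Fin (n + 1) → ℂ) :=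
  fun i => Submodule.span ℂ (v '' {j | j ≤ i})

/-- A full flag in `ℂ^(n+1)`. -/
def IsFlag (n : ℕ) (V : Fin (n + 1) → Submodule ℂ (Fin (n + 1) → ℂ)) : Prop :=
  Monotone V ∧ ∀ i : Fin (n + 1), Module.finrank ℂ (V i) = (i : ℕ) + 1

/-- The action of `GL(n+1, ℂ)` on flags. -/
def actFlag (n : ℕ) (g : Matrix.GeneralLinearGroup (Fin (n + 1)) ℂ)
    (V : Fin (n + 1) → Submodule ℂ (Fin (n + 1) → ℂ)) :
    Fin (n + 1) → Submodule ℂ (Fin (n + 1) → ℂ) :=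
  fun i => (V i).map (Matrix.mulVecLin (g : Matrix (Fin (n + 1)) (Fin (n + 1)) ℂ))

/-- Membership in the Borel subgroup `B` of invertible upper triangular matrices. -/
def InB (n : ℕ) (g : Matrix.GeneralLinearGroup (Fin (n + 1)) ℂ) : Prop :=
  ∀ i j : Fin (n + 1), j < i → (g : Matrix (Fin (n + 1)) (Fin (n + 1)) ℂ) i j = 0

/-- Membership in `B_{n-1} ⊂ B` : upper triangular, last diagonal entry `1`,
remaining last-column entries `0`. -/
def InBsmall (n : ℕ) (g : Matrix.GeneralLinearGroup (Fin (n + 1)) ℂ) : Prop :=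
  InB n g ∧
    (g : Matrix (Fin (n + 1)) (Fin (n + 1)) ℂ) (Fin.last n) (Fin.last n) = 1 ∧
    ∀ i : Fin (n + 1), i ≠ Fin.last n →
      (g : Matrix (Fin (n + 1)) (Fin (n + 1)) ℂ) i (Fin.last n) = 0

/-- The spanning vectors of the flag `E* = (e_n ⊂ e_1 ⊂ ⋯ ⊂ e_{n-1})`. -/
def eStarVec (n : ℕ) : Fin (n + 1) → Fin (n + 1) → ℂ :=
  fun i => Fin.cases (e n (Fin.last n)) (fun j => e n j.castSucc) i

/-- Membership in `B*`, the stabilizer of the flag `E*`. -/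
def InBstar (n : ℕ) (g : Matrix.GeneralLinearGroup (Fin (n + 1)) ℂ) : Prop :=
  actFlag n g (flagOf n (eStarVec n)) = flagOf n (eStarVec n)

/-- Membership in `H`, the invertible diagonal matrices. -/
def InH (n : ℕ) (g : Matrix.GeneralLinearGroup (Fin (n + 1)) ℂ) : Prop :=
  ∀ i j : Fin (n + 1), i ≠ j → (g : Matrix (Fin (n + 1)) (Fin (n + 1)) ℂ) i j = 0

/-- The orbit of a flag under the subgroup `{g | P g}`. -/
def orbit (n : ℕ) (P : Matrix.GeneralLinearGroup (Fin (n + 1)) ℂ → Prop)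
    (V : Fin (n + 1) → Submodule ℂ (Fin (n + 1) → ℂ)) :
    Set (Fin (n + 1) → Submodule ℂ (Fin (n + 1) → ℂ)) :=
  {W | ∃ g : Matrix.GeneralLinearGroup (Fin (n + 1)) ℂ, P g ∧ W = actFlag n g V}

/-- A sequence of spanning vectors is in standard form. -/
def IsStdForm (n : ℕ) (v : Fin (n + 1) → Fin (n + 1) → ℂ) : Prop :=
  LinearIndependent ℂ v ∧
  (∀ i, (∃ j, v i = e n j) ∨ (∃ j, j ≠ Fin.last n ∧ v i = hatE n j)) ∧
  (∃ i, v i = e n (Fin.last n)) ∧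
  (∀ i k : Fin (n + 1), v i = e n (Fin.last n) → i < k → ∃ j, v k = e n j) ∧
  (∀ i k ji jk : Fin (n + 1), i < k → ji ≠ Fin.last n → jk ≠ Fin.last n →
    v i = hatE n ji → v k = hatE n jk → jk < ji)

/-- `vs` spans the flag `F*` : each hat vector `ê j` of `v` is replaced by `e j`,
all other entries are unchanged. -/
def StarPair (n : ℕ) (v vs : Fin (n + 1) → Fin (n + 1) → ℂ) : Prop :=
  ∀ q : Fin (n + 1),
    ((∃ t, v q = e n t) → vs q = v q) ∧
    (∀ j : Fin (n + 1), j ≠ Fin.last n → v q = hatE n j → vs q = e n j)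

/-- `vt` spans the flag `F̃` attached to the standard-form flag spanned by `v`. -/
def TildePair (n : ℕ) (v vt : Fin (n + 1) → Fin (n + 1) → ℂ) : Prop :=
  ((∀ q, ∃ t, v q = e n t) ∧ vt = v) ∨
  (∃ (k : ℕ) (hk : 0 < k) (i j : Fin k → Fin (n + 1)) (p : Fin (n + 1)),
    StrictAnti i ∧ StrictMono j ∧
    (∀ m : Fin k, j m ≠ Fin.last n ∧ v (i m) = hatE n (j m)) ∧
    v p = e n (Fin.last n) ∧
    (∀ q : Fin (n + 1), (∀ m : Fin k, q ≠ i m) → ∃ t, v q = e n t) ∧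
    vt (i ⟨k - 1, Nat.sub_lt hk Nat.one_pos⟩) = e n (Fin.last n) ∧
    (∀ (m : Fin k) (h : (m : ℕ) + 1 < k), vt (i m) = e n (j ⟨(m : ℕ) + 1, h⟩)) ∧
    vt p = e n (j ⟨0, hk⟩) ∧
    (∀ q : Fin (n + 1), (∀ m : Fin k, q ≠ i m) → q ≠ p → vt q = v q))

/-- The `(n+1)`-cycle `σ`, zero-indexed version of the paper's `σ = (n, n-1, …, 1)`:
`σ 0 = n` and `σ k = k - 1` for `k ≥ 1`. -/
def sigma (n : ℕ) : Equiv.Perm (Fin (n + 1)) := (finRotate (n + 1))⁻¹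

/-- The cycle `τ_Δ = (n, j_k, …, j_2, j_1)` attached to a subset
`Δ = {j_1 < ⋯ < j_k < n} ∪ {n}`:  it sends each element of `Δ` to the next
smaller element (the smallest going back to the largest) and fixes everything else. -/
def tauDelta (n : ℕ) (Δ : Finset (Fin (n + 1))) : Equiv.Perm (Fin (n + 1)) :=
  ((Δ.sort (· ≤ ·)).formPerm)⁻¹

/-- `Δ` is a decreasing sequence for `w⁻¹`. -/
def IsDecreasingFor (n : ℕ) (Δ : Finset (Fin (n + 1)))
    (w : Equiv.Perm (Fin (n + 1))) : Prop :=
  ∀ x ∈ Δ, ∀ y ∈ Δ, x < y → w⁻¹ y < w⁻¹ x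

/-- The spanning vectors of the flag `y(E*)`. -/
def eStarPermVec (n : ℕ) (y : Equiv.Perm (Fin (n + 1))) :
    Fin (n + 1) → Fin (n + 1) → ℂ :=
  fun i => Fin.cases (e n (y (Fin.last n))) (fun t => e n (y t.castSucc)) i

/-- Coxeter length = number of inversions. -/
def len (n : ℕ) (w : Equiv.Perm (Fin (n + 1))) : ℕ :=
  (Finset.univ.filter
    (fun p : Fin (n + 1) × Fin (n + 1) => p.1 < p.2 ∧ w p.2 < w p.1)).card

/-- Length with respect to the set of simple reflections `S*`. -/
def lenStar (n : ℕ) (x : Equiv.Perm (Fin (n + 1))) : ℕ :=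
  len n ((sigma n)⁻¹ * x * sigma n)

/-- Bruhat order on the symmetric group (tableau criterion):
`y ≤ w` iff `#{i ≤ p : y i ≤ q} ≥ #{i ≤ p : w i ≤ q}` for all `p, q`. -/
def bruhatLE (n : ℕ) (y w : Equiv.Perm (Fin (n + 1))) : Prop :=
  ∀ p q : Fin (n + 1),
    (Finset.univ.filter (fun i => i ≤ p ∧ w i ≤ q)).card ≤
      (Finset.univ.filter (fun i => i ≤ p ∧ y i ≤ q)).card

/-- The total order `n ≺ 1 ≺ 2 ≺ ⋯ ≺ n - 1` (zero-indexed). -/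
def precOrd (n : ℕ) (a b : Fin (n + 1)) : Prop :=
  finRotate (n + 1) a < finRotate (n + 1) b

/-- `(w, u*)` is a Shareshian pair. -/
def IsShPair (n : ℕ) (w u : Equiv.Perm (Fin (n + 1))) : Prop :=
  ∃ Δ : Finset (Fin (n + 1)), Fin.last n ∈ Δ ∧ IsDecreasingFor n Δ w ∧
    u = tauDelta n Δ * w * (sigma n)⁻¹

/-- The matrix whose `i`-th column is `v i`. -/
def colMat (n : ℕ) (v : Fin (n + 1) → Fin (n + 1) → ℂ) :
    Matrix (Fin (n + 1)) (Fin (n + 1)) ℂ :=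
  Matrix.of fun r c => v c r

/-- The double coset `{b₁ * g * b₂ | P b₁, Q b₂}` as a set of matrices. -/
def dblCoset (n : ℕ) (P Q : Matrix.GeneralLinearGroup (Fin (n + 1)) ℂ → Prop)
    (g : Matrix (Fin (n + 1)) (Fin (n + 1)) ℂ) :
    Set (Matrix (Fin (n + 1)) (Fin (n + 1)) ℂ) :=
  {x | ∃ b₁ b₂ : Matrix.GeneralLinearGroup (Fin (n + 1)) ℂ, P b₁ ∧ Q b₂ ∧
    x = (b₁ : Matrix (Fin (n + 1)) (Fin (n + 1)) ℂ) * g *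
      (b₂ : Matrix (Fin (n + 1)) (Fin (n + 1)) ℂ)}

/-- The coordinate subspace `E_q = span {e_1, …, e_q}`. -/
def Esub (n : ℕ) (q : ℕ) : Submodule ℂ (Fin (n + 1) → ℂ) :=
  Submodule.span ℂ (e n '' {t : Fin (n + 1) | (t : ℕ) < q})

/-- The line `L = ℂ e_n`. -/
def Lline (n : ℕ) : Submodule ℂ (Fin (n + 1) → ℂ) :=
  Submodule.span ℂ {e n (Fin.last n)}

variable {n : ℕ}

lemma e_apply (s a : Fin (n+1)) : e n s a = if a = s then 1 else 0 := by
  simp [e, Pi.single_apply]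

lemma mulVecLin_GL_injective (g : Matrix.GeneralLinearGroup (Fin (n + 1)) ℂ) :
    Function.Injective (Matrix.mulVecLin (g : Matrix (Fin (n + 1)) (Fin (n + 1)) ℂ)) := by
  intro x y hxy
  have h2 := congrArg (Matrix.mulVecLin ((g⁻¹ : Matrix.GeneralLinearGroup (Fin (n+1)) ℂ) :
      Matrix (Fin (n + 1)) (Fin (n + 1)) ℂ)) hxy
  simp only [Matrix.mulVecLin_apply, Matrix.mulVec_mulVec, Units.inv_mul, Matrix.one_mulVec] at h2
  exact h2

lemma coordSpan_mem {S : Set (Fin (n+1))} {x : Fin (n+1) → ℂ} :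
    x ∈ Submodule.span ℂ (e n '' S) ↔ ∀ a ∉ S, x a = 0 := by
  constructor
  · intro hx
    let K : Submodule ℂ (Fin (n+1) → ℂ) :=
      { carrier := {y | ∀ a ∉ S, y a = 0}
        add_mem' := fun hy hz a ha => by simp only [Pi.add_apply]; rw [hy a ha, hz a ha, add_zero]
        zero_mem' := fun a _ => rfl
        smul_mem' := fun c y hy a ha => by simp only [Pi.smul_apply]; rw [hy a ha, smul_zero] }
    have : Submodule.span ℂ (e n '' S) ≤ K := by
      rw [Submodule.span_le]
      rintro _ ⟨s, hs, rfl⟩ a ha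
      have : a ≠ s := fun h => ha (h ▸ hs)
      simp [e_apply, this]
    exact this hx
  · intro hx
    have hrep : x = ∑ a : Fin (n+1), x a • e n a := by
      have : ∀ a, x a • e n a = Pi.single a (x a) := by
        intro a; funext b; simp [e_apply, Pi.single_apply]
      rw [funext this, Finset.univ_sum_single]
    rw [hrep]
    refine Submodule.sum_mem _ (fun a _ => ?_)
    by_cases h : a ∈ S
    · exact Submodule.smul_mem _ _ (Submodule.subset_span ⟨a, h, rfl⟩)
    · rw [hx a h]; simp

lemma hfix_coord (W : Submodule ℂ (Fin (n+1) → ℂ))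
    (hW : ∀ h : Matrix.GeneralLinearGroup (Fin (n + 1)) ℂ, InH n h →
      W.map (Matrix.mulVecLin (h : Matrix (Fin (n + 1)) (Fin (n + 1)) ℂ)) = W) :
    W = Submodule.span ℂ (e n '' {s | e n s ∈ W}) := by
  refine le_antisymm ?_ ?_
  · intro x hx
    have hcoord : ∀ a, x a ≠ 0 → e n a ∈ W := by
      intro a ha
      set d : Fin (n+1) → ℂ := fun i => if i = a then 2 else 1 with hd
      have hd0 : ∀ i, d i ≠ 0 := by
        intro i; by_cases h : i = a <;> simp [hd, h]
      have h1 : Matrix.diagonal d * Matrix.diagonal d⁻¹ = 1 := by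
        rw [Matrix.diagonal_mul_diagonal,
          show (fun i => d i * d⁻¹ i) = (1 : Fin (n+1) → ℂ) from
            funext fun i => mul_inv_cancel₀ (hd0 i)]
        exact Matrix.diagonal_one
      have h2 : Matrix.diagonal d⁻¹ * Matrix.diagonal d = 1 := by
        rw [Matrix.diagonal_mul_diagonal,
          show (fun i => d⁻¹ i * d i) = (1 : Fin (n+1) → ℂ) from
            funext fun i => inv_mul_cancel₀ (hd0 i)]
        exact Matrix.diagonal_one
      set hGL : Matrix.GeneralLinearGroup (Fin (n + 1)) ℂ :=
        ⟨Matrix.diagonal d, Matrix.diagonal d⁻¹, h1, h2⟩ with hGLdef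
      have hH : InH n hGL := by
        intro i j hij
        exact Matrix.diagonal_apply_ne d hij
      have hx' : Matrix.mulVecLin (Matrix.diagonal d) x ∈ W := by
        have := hW hGL hH
        rw [← this]
        exact Submodule.mem_map_of_mem hx
      have hy : Matrix.mulVecLin (Matrix.diagonal d) x - x ∈ W := sub_mem hx' hx
      have hyeq : Matrix.mulVecLin (Matrix.diagonal d) x - x = x a • e n a := by
        funext b
        by_cases h : b = a <;>
          simp [Matrix.mulVecLin_apply, Matrix.mulVec_diagonal, hd, h, e_apply] <;> ring
      rw [hyeq] at hy
      have := Submodule.smul_mem W (x a)⁻¹ hy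
      rwa [smul_smul, inv_mul_cancel₀ ha, one_smul] at this
    have hx2 : x ∈ Submodule.span ℂ (e n '' {a | x a ≠ 0}) := by
      rw [coordSpan_mem]
      intro a ha
      by_contra h
      exact ha h
    refine Submodule.span_mono (Set.image_mono ?_) hx2
    intro a ha
    exact hcoord a ha
  · rw [Submodule.span_le]; rintro _ ⟨s, hs, rfl⟩; exact hs

lemma image_Iic_eq_range (w : Fin (n+1) → Fin (n+1) → ℂ) (i : Fin (n+1)) :
    w '' {j | j ≤ i} = Set.range (fun j : {j : Fin (n+1) // j ≤ i} => w j) := by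
  ext x
  constructor
  · rintro ⟨j, hj, rfl⟩; exact ⟨⟨j, hj⟩, rfl⟩
  · rintro ⟨⟨j, hj⟩, rfl⟩; exact ⟨j, hj, rfl⟩

lemma mem_span_lead (π : Equiv.Perm (Fin (n+1))) (i : Fin (n+1))
    (t : Fin (n+1) → Fin (n+1)) (ht : Function.Injective t)
    (w : Fin (n+1) → Fin (n+1) → ℂ)
    (hlead : ∀ j, w j (t j) ≠ 0)
    (hvan : ∀ j a, π (t j) < π a → w j a = 0)
    (s : Fin (n+1))
    (hs : e n s ∈ Submodule.span ℂ (w '' {j | j ≤ i})) :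
    ∃ j, j ≤ i ∧ s = t j := by
  rw [image_Iic_eq_range, Submodule.mem_span_range_iff_exists_fun] at hs
  obtain ⟨c, hc⟩ := hs
  set A : Finset {j : Fin (n+1) // j ≤ i} := Finset.univ.filter (fun j => c j ≠ 0) with hA
  have hAne : A.Nonempty := by
    by_contra hne
    rw [Finset.not_nonempty_iff_eq_empty] at hne
    have : (∑ j : {j : Fin (n+1) // j ≤ i}, c j • w j) s = 0 := by
      rw [Finset.sum_apply]
      refine Finset.sum_eq_zero fun j _ => ?_
      have : c j = 0 := by
        by_contra h
        have : j ∈ A := by simp [hA, h]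
        simp [hne] at this
      simp [this]
    rw [hc] at this
    simp [e_apply] at this
  obtain ⟨M, hM, hMmax⟩ := A.exists_max_image (fun j => π (t j.1)) hAne
  have hcM : c M ≠ 0 := (Finset.mem_filter.mp hM).2
  have heval : (∑ j : {j : Fin (n+1) // j ≤ i}, c j • w j) (t M.1) = c M * w M.1 (t M.1) := by
    rw [Finset.sum_apply]
    refine Finset.sum_eq_single M (fun j _ hj => ?_) (by simp)
    by_cases hcj : c j = 0
    · simp [hcj]
    · have hjA : j ∈ A := by simp [hA, hcj]
      have hle : π (t j.1) ≤ π (t M.1) := hMmax j hjA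
      have hne : π (t j.1) ≠ π (t M.1) := by
        intro h
        exact hj (Subtype.ext (ht (π.injective h)))
      have : w j.1 (t M.1) = 0 := hvan j.1 (t M.1) (lt_of_le_of_ne hle hne)
      simp [this]
  rw [hc] at heval
  have : e n s (t M.1) ≠ 0 := by
    rw [heval]
    exact mul_ne_zero hcM (hlead M.1)
  rw [e_apply] at this
  by_cases h : t M.1 = s
  · exact ⟨M.1, M.2, h.symm⟩
  · simp [h] at this

lemma linearIndependent_e : LinearIndependent ℂ (e n) := by
  have := (Pi.basisFun ℂ (Fin (n+1))).linearIndependent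
  convert this using 1
  funext i
  simp [e, Pi.basisFun_apply]

lemma finrank_coordSpan (S : Set (Fin (n+1))) :
    Module.finrank ℂ (Submodule.span ℂ (e n '' S)) = S.ncard := by
  have : Fintype S := S.toFinite.fintype
  have hli : LinearIndependent ℂ (fun s : S => e n s) :=
    linearIndependent_e.comp ((↑) : S → Fin (n+1)) Subtype.coe_injective
  have himg : Set.range (fun s : S => e n s) = e n '' S := by
    rw [Set.image_eq_range]
  rw [← himg, finrank_span_eq_card hli, Set.ncard_eq_toFinset_card']
  simp [Set.toFinset_card]

lemma uniq_hfix (π : Equiv.Perm (Fin (n+1))) (g : Matrix.GeneralLinearGroup (Fin (n + 1)) ℂ)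
    (t : Fin (n+1) → Fin (n+1)) (ht : Function.Injective t)
    (hlead : ∀ s, Matrix.mulVecLin (g : Matrix (Fin (n + 1)) (Fin (n + 1)) ℂ) (e n s) s ≠ 0)
    (hvan : ∀ s a, π s < π a →
      Matrix.mulVecLin (g : Matrix (Fin (n + 1)) (Fin (n + 1)) ℂ) (e n s) a = 0)
    (W : Fin (n + 1) → Submodule ℂ (Fin (n + 1) → ℂ))
    (hWg : W = actFlag n g (flagOf n (fun j => e n (t j))))
    (hfix : ∀ h : Matrix.GeneralLinearGroup (Fin (n + 1)) ℂ, InH n h → actFlag n h W = W) :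
    W = flagOf n (fun j => e n (t j)) := by
  funext i
  have hWi : W i = Submodule.span ℂ
      ((fun j => Matrix.mulVecLin (g : Matrix (Fin (n + 1)) (Fin (n + 1)) ℂ) (e n (t j))) ''
        {j | j ≤ i}) := by
    rw [hWg]
    unfold actFlag flagOf
    rw [Submodule.map_span, Set.image_image]
  set S : Set (Fin (n+1)) := {s | e n s ∈ W i} with hSdef
  have hSW : W i = Submodule.span ℂ (e n '' S) :=
    hfix_coord (W i) (fun h hh => congrFun (hfix h hh) i)
  have hST : S ⊆ t '' {j | j ≤ i} := by
    intro s hs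
    have hs' : e n s ∈ W i := hs
    rw [hWi] at hs'
    obtain ⟨j, hj, hsj⟩ := mem_span_lead π i t ht _ (fun j => hlead (t j))
      (fun j a h => hvan (t j) a h) s hs'
    exact ⟨j, hj, hsj.symm⟩
  have hFeq : flagOf n (fun j => e n (t j)) i = Submodule.span ℂ (e n '' (t '' {j | j ≤ i})) := by
    unfold flagOf
    rw [Set.image_image]
  have hfrF : Module.finrank ℂ (flagOf n (fun j => e n (t j)) i) = (t '' {j | j ≤ i}).ncard := by
    rw [hFeq, finrank_coordSpan]
  have hfrW : Module.finrank ℂ (W i) = (t '' {j | j ≤ i}).ncard := by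
    rw [hWg]
    have := (Submodule.equivMapOfInjective
      (Matrix.mulVecLin (g : Matrix (Fin (n + 1)) (Fin (n + 1)) ℂ))
      (mulVecLin_GL_injective g) (flagOf n (fun j => e n (t j)) i)).finrank_eq
    show Module.finrank ℂ
      (Submodule.map (Matrix.mulVecLin (g : Matrix (Fin (n + 1)) (Fin (n + 1)) ℂ))
        (flagOf n (fun j => e n (t j)) i)) = _
    rw [← this, hfrF]
  have hfrW' : Module.finrank ℂ (W i) = S.ncard := by
    rw [hSW, finrank_coordSpan]
  have hcard : (t '' {j | j ≤ i}).ncard ≤ S.ncard := by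
    rw [← hfrW', hfrW]
  have hSeq : S = t '' {j | j ≤ i} :=
    Set.eq_of_subset_of_ncard_le hST hcard (Set.toFinite _)
  rw [hSW, hSeq, hFeq]

lemma mulVecLin_e (g : Matrix.GeneralLinearGroup (Fin (n + 1)) ℂ) (s a : Fin (n+1)) :
    Matrix.mulVecLin (g : Matrix (Fin (n + 1)) (Fin (n + 1)) ℂ) (e n s) a =
      (g : Matrix (Fin (n + 1)) (Fin (n + 1)) ℂ) a s := by
  simp [Matrix.mulVecLin_apply, e, Matrix.mulVec_single]

lemma InH_mulVecLin_e (h : Matrix.GeneralLinearGroup (Fin (n + 1)) ℂ) (hh : InH n h)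
    (s : Fin (n+1)) :
    Matrix.mulVecLin (h : Matrix (Fin (n + 1)) (Fin (n + 1)) ℂ) (e n s) =
      ((h : Matrix (Fin (n + 1)) (Fin (n + 1)) ℂ) s s) • e n s := by
  funext a
  rw [Pi.smul_apply, mulVecLin_e, e_apply]
  by_cases has : a = s
  · subst has; simp
  · rw [hh a s has]; simp [has]

lemma InH_diag_ne_zero (h : Matrix.GeneralLinearGroup (Fin (n + 1)) ℂ) (hh : InH n h)
    (s : Fin (n+1)) : (h : Matrix (Fin (n + 1)) (Fin (n + 1)) ℂ) s s ≠ 0 := by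
  intro h0
  have : Matrix.mulVecLin (h : Matrix (Fin (n + 1)) (Fin (n + 1)) ℂ) (e n s) =
      Matrix.mulVecLin (h : Matrix (Fin (n + 1)) (Fin (n + 1)) ℂ) 0 := by
    rw [InH_mulVecLin_e h hh, h0, zero_smul, map_zero]
  have := mulVecLin_GL_injective h this
  have := congrFun this s
  rw [e_apply] at this
  simp at this

lemma hfix_flag (t : Fin (n+1) → Fin (n+1))
    (h : Matrix.GeneralLinearGroup (Fin (n + 1)) ℂ) (hh : InH n h) :
    actFlag n h (flagOf n (fun j => e n (t j))) = flagOf n (fun j => e n (t j)) := by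
  funext i
  show Submodule.map _ _ = _
  unfold flagOf
  rw [Submodule.map_span, Set.image_image]
  refine le_antisymm (Submodule.span_le.mpr ?_) (Submodule.span_le.mpr ?_)
  · rintro _ ⟨j, hj, rfl⟩
    show Matrix.mulVecLin _ (e n (t j)) ∈ _
    rw [InH_mulVecLin_e h hh]
    exact Submodule.smul_mem _ _ (Submodule.subset_span ⟨j, hj, rfl⟩)
  · rintro _ ⟨j, hj, rfl⟩
    have : e n (t j) = ((h : Matrix (Fin (n + 1)) (Fin (n + 1)) ℂ) (t j) (t j))⁻¹ •
        Matrix.mulVecLin (h : Matrix (Fin (n + 1)) (Fin (n + 1)) ℂ) (e n (t j)) := by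
      rw [InH_mulVecLin_e h hh, smul_smul, inv_mul_cancel₀ (InH_diag_ne_zero h hh _), one_smul]
    show e n (t j) ∈ _
    rw [this]
    exact Submodule.smul_mem _ _ (Submodule.subset_span ⟨j, hj, rfl⟩)

lemma InB_diag_ne (g : Matrix.GeneralLinearGroup (Fin (n + 1)) ℂ) (hg : InB n g)
    (s : Fin (n+1)) : (g : Matrix (Fin (n + 1)) (Fin (n + 1)) ℂ) s s ≠ 0 := by
  have hbt : Matrix.BlockTriangular (g : Matrix (Fin (n + 1)) (Fin (n + 1)) ℂ) id :=
    fun i j h => hg i j h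
  have hdet := Matrix.det_of_upperTriangular hbt
  have hunit : IsUnit (g : Matrix (Fin (n + 1)) (Fin (n + 1)) ℂ).det :=
    (Matrix.isUnit_iff_isUnit_det _).mp g.isUnit
  rw [hdet] at hunit
  exact Finset.prod_ne_zero_iff.mp hunit.ne_zero s (Finset.mem_univ s)

lemma eStarVec_eq (i : Fin (n+1)) : eStarVec n i = e n ((finRotate (n+1))⁻¹ i) := by
  induction i using Fin.cases with
  | zero =>
    have : (finRotate (n+1))⁻¹ 0 = Fin.last n := by
      apply (finRotate (n+1)).injective
      simp [finRotate_last]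
    simp [eStarVec, this]
  | succ j =>
    have : (finRotate (n+1))⁻¹ j.succ = j.castSucc := by
      apply (finRotate (n+1)).injective
      simp [finRotate_succ_apply, Fin.coeSucc_eq_succ]
    simp [eStarVec, this]

lemma flagOf_eStar (p : Fin (n+1)) :
    flagOf n (eStarVec n) p =
      Submodule.span ℂ (e n '' {s | finRotate (n+1) s ≤ p}) := by
  unfold flagOf
  congr 1
  ext x
  constructor
  · rintro ⟨j, hj, rfl⟩
    refine ⟨(finRotate (n+1))⁻¹ j, ?_, (eStarVec_eq j).symm⟩
    show finRotate (n+1) ((finRotate (n+1))⁻¹ j) ≤ p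
    rw [← Equiv.Perm.mul_apply, mul_inv_cancel, Equiv.Perm.one_apply]
    exact hj
  · rintro ⟨s, hs, rfl⟩
    refine ⟨finRotate (n+1) s, hs, ?_⟩
    rw [eStarVec_eq, ← Equiv.Perm.mul_apply, inv_mul_cancel, Equiv.Perm.one_apply]

lemma InBstar_mem (g : Matrix.GeneralLinearGroup (Fin (n + 1)) ℂ) (hg : InBstar n g)
    (s : Fin (n+1)) :
    Matrix.mulVecLin (g : Matrix (Fin (n + 1)) (Fin (n + 1)) ℂ) (e n s) ∈
      flagOf n (eStarVec n) (finRotate (n+1) s) := by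
  have hes : e n s ∈ flagOf n (eStarVec n) (finRotate (n+1) s) := by
    rw [flagOf_eStar, coordSpan_mem]
    intro a ha
    have : a ≠ s := by rintro rfl; exact ha (Set.mem_setOf.mpr (le_refl _))
    simp [e_apply, this]
  have := congrFun hg (finRotate (n+1) s)
  rw [← this]
  exact Submodule.mem_map_of_mem hes

lemma InBstar_van (g : Matrix.GeneralLinearGroup (Fin (n + 1)) ℂ) (hg : InBstar n g)
    (s a : Fin (n+1)) (h : finRotate (n+1) s < finRotate (n+1) a) :
    Matrix.mulVecLin (g : Matrix (Fin (n + 1)) (Fin (n + 1)) ℂ) (e n s) a = 0 := by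
  have hm := InBstar_mem g hg s
  rw [flagOf_eStar, coordSpan_mem] at hm
  exact hm a (not_le.mpr h)

lemma InBstar_lead (g : Matrix.GeneralLinearGroup (Fin (n + 1)) ℂ) (hg : InBstar n g)
    (s : Fin (n+1)) :
    Matrix.mulVecLin (g : Matrix (Fin (n + 1)) (Fin (n + 1)) ℂ) (e n s) s ≠ 0 := by
  intro h0
  set w := Matrix.mulVecLin (g : Matrix (Fin (n + 1)) (Fin (n + 1)) ℂ) (e n s) with hw
  by_cases hlast : s = Fin.last n
  · have hπs : finRotate (n+1) s = 0 := by rw [hlast, finRotate_last]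
    have hwz : w = 0 := by
      funext a
      by_cases has : a = s
      · rw [has]; exact h0
      · refine InBstar_van g hg s a ?_
        rw [hπs]
        exact Fin.pos_iff_ne_zero.mpr
          (fun h => has ((finRotate (n+1)).injective (by rw [h, hπs])))
    have hez : e n s = 0 := by
      apply mulVecLin_GL_injective g
      rw [← hw, hwz, map_zero]
    have := congrFun hez s
    simp [e_apply] at this
  · have hπs0 : finRotate (n+1) s ≠ 0 := by
      intro h
      exact hlast ((finRotate (n+1)).injective (by rw [h, finRotate_last]))
    have hpos : 0 < (finRotate (n+1) s : ℕ) :=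
      Nat.pos_of_ne_zero (fun h => hπs0 (Fin.ext h))
    have hplt : (finRotate (n+1) s : ℕ) - 1 < n + 1 := by
      have := (finRotate (n+1) s).isLt; omega
    set p : Fin (n+1) := ⟨(finRotate (n+1) s : ℕ) - 1, hplt⟩ with hp
    have hwp : w ∈ flagOf n (eStarVec n) p := by
      rw [flagOf_eStar, coordSpan_mem]
      intro a ha
      by_contra hwa
      have h1 : ¬ (finRotate (n+1) s < finRotate (n+1) a) :=
        fun h => hwa (InBstar_van g hg s a h)
      have h2 : a ≠ s := fun h => hwa (h ▸ h0)
      have h3 : finRotate (n+1) a < finRotate (n+1) s :=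
        lt_of_le_of_ne (not_lt.mp h1) (fun h => h2 ((finRotate (n+1)).injective h))
      apply ha
      show finRotate (n+1) a ≤ p
      rw [Fin.le_def]
      have h4 := Fin.lt_def.mp h3
      show (finRotate (n+1) a : ℕ) ≤ (finRotate (n+1) s : ℕ) - 1
      omega
    have hmap := congrFun hg p
    rw [← hmap] at hwp
    obtain ⟨x, hx, hgx⟩ := Submodule.mem_map.mp hwp
    have hxe : x = e n s := mulVecLin_GL_injective g (by rw [hgx])
    rw [hxe, flagOf_eStar, coordSpan_mem] at hx
    have hns : s ∉ {a | finRotate (n+1) a ≤ p} := by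
      intro h
      have h' : finRotate (n+1) s ≤ p := h
      rw [Fin.le_def] at h'
      have : ((finRotate (n+1) s : ℕ)) ≤ (finRotate (n+1) s : ℕ) - 1 := h'
      omega
    have := hx s hns
    simp [e_apply] at this

/-- a standard-form flag with no hat vectors is fixed by `H`, and it is
the unique `H`-fixed flag in its `B`-orbit and in its `B*`-orbit. -/
theorem statement1 (n : ℕ) (hn : 1 ≤ n) (v : Fin (n + 1) → Fin (n + 1) → ℂ)
    (hstd : IsStdForm n v) (hnohat : ∀ i, ∃ t, v i = e n t) :
    (∀ h : Matrix.GeneralLinearGroup (Fin (n + 1)) ℂ, InH n h →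
      actFlag n h (flagOf n v) = flagOf n v) ∧
    (∀ W ∈ orbit n (InB n) (flagOf n v),
      (∀ h : Matrix.GeneralLinearGroup (Fin (n + 1)) ℂ, InH n h → actFlag n h W = W) →
        W = flagOf n v) ∧
    (∀ W ∈ orbit n (InBstar n) (flagOf n v),
      (∀ h : Matrix.GeneralLinearGroup (Fin (n + 1)) ℂ, InH n h → actFlag n h W = W) →
        W = flagOf n v) := by
  set t : Fin (n+1) → Fin (n+1) := fun j => (hnohat j).choose with htdef
  have hvt : ∀ j, v j = e n (t j) := fun j => (hnohat j).choose_spec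
  have hveq : v = fun j => e n (t j) := funext hvt
  have hvinj : Function.Injective v := hstd.1.injective
  have ht : Function.Injective t := by
    intro a b hab
    apply hvinj
    rw [hvt a, hvt b, hab]
  refine ⟨?_, ?_, ?_⟩
  · intro h hh
    rw [hveq]
    exact hfix_flag t h hh
  · rintro W ⟨g, hgB, rfl⟩ hfix
    rw [hveq] at hfix ⊢
    refine uniq_hfix 1 g t ht ?_ ?_ _ rfl hfix
    · intro s
      rw [mulVecLin_e]
      exact InB_diag_ne g hgB s
    · intro s a hsa
      rw [mulVecLin_e]
      exact hgB a s (by simpa using hsa)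
  · rintro W ⟨g, hgB, rfl⟩ hfix
    rw [hveq] at hfix ⊢
    exact uniq_hfix (finRotate (n+1)) g t ht (InBstar_lead g hgB) (InBstar_van g hgB)
      _ rfl hfix


end ShareshianPairs
end
end

section
/- The map F ↦ (F̃, F*) on flags in standard form is injective: if F and G are flags in standard form in ℂ^n with F̃ = G̃ and F* = G*, then F = G. -/
/-
Common setup.  The ambient space is `ℂ^(n+1)` (so the paper's `n` is our `n + 1`,
and the paper's hypothesis `n ≥ 2` becomes `1 ≤ n`).  Coordinates are indexed by
`Fin (n+1)`, zero-indexed, so the paper's index `i ∈ {1, …, n}` is our `i - 1`,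
and the paper's `e_n` is `e (Fin.last n)`.
-/

noncomputable section

namespace ShareshianPairs

/-! ### Auxiliary lemmas for Statement 4 -/

lemma e_li (n : ℕ) : LinearIndependent ℂ (e n) := by
  have h : e n = ⇑(Pi.basisFun ℂ (Fin (n+1))) := by
    funext i; rw [Pi.basisFun_apply]; rfl
  rw [h]; exact (Pi.basisFun ℂ (Fin (n+1))).linearIndependent

lemma e_inj (n : ℕ) : Function.Injective (e n) := (e_li n).injective

lemma e_same (n : ℕ) (i : Fin (n+1)) : e n i i = 1 := Pi.single_eq_same i 1
lemma e_ne (n : ℕ) {i k : Fin (n+1)} (h : k ≠ i) : e n i k = 0 := Pi.single_eq_of_ne h 1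

lemma e_eq_one_iff {n : ℕ} {i k : Fin (n+1)} : e n i k = 1 ↔ k = i := by
  constructor
  · intro h; by_contra hk; rw [e_ne n hk] at h; norm_num at h
  · rintro rfl; exact e_same n _

lemma hatE_ne_e {n : ℕ} {j t : Fin (n+1)} (hj : j ≠ Fin.last n) : hatE n j ≠ e n t := by
  intro h
  have h1 := congrFun h j
  have h2 := congrFun h (Fin.last n)
  rw [show hatE n j j = 1 by
      simp only [hatE, Pi.add_apply, e_same, e_ne n hj]; ring] at h1
  rw [show hatE n j (Fin.last n) = 1 by
      simp only [hatE, Pi.add_apply, e_same, e_ne n (Ne.symm hj)]; ring] at h2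
  have ha := e_eq_one_iff.1 h1.symm
  have hb := e_eq_one_iff.1 h2.symm
  exact hj (ha.trans hb.symm)

lemma mem_span_e {n : ℕ} {S : Set (Fin (n+1))} {t : Fin (n+1)} :
    e n t ∈ Submodule.span ℂ (e n '' S) ↔ t ∈ S := by
  constructor
  · intro h; by_contra ht; exact (e_li n).notMem_span_image ht h
  · intro h; exact Submodule.subset_span ⟨t, h, rfl⟩

lemma flag_inj {n : ℕ} {f g : Fin (n+1) → Fin (n+1)}
    (hf : Function.Injective f)
    (h : flagOf n (fun q => e n (f q)) = flagOf n (fun q => e n (g q))) :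
    f = g := by
  have hsets : ∀ i : Fin (n+1), f '' {j | j ≤ i} = g '' {j | j ≤ i} := by
    intro i
    have hi := congrFun h i
    unfold flagOf at hi
    rw [show (fun q => e n (f q)) '' {j | j ≤ i} = e n '' (f '' {j | j ≤ i}) from
        Set.image_comp (e n) f _,
      show (fun q => e n (g q)) '' {j | j ≤ i} = e n '' (g '' {j | j ≤ i}) from
        Set.image_comp (e n) g _] at hi
    ext t
    constructor
    · intro ht
      exact mem_span_e.1 (hi ▸ mem_span_e.2 ht)
    · intro ht
      exact mem_span_e.1 (hi ▸ mem_span_e.2 ht)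
  suffices H : ∀ m : ℕ, ∀ i : Fin (n+1), (i : ℕ) = m → f i = g i by
    funext i; exact H i.val i rfl
  intro m
  induction m using Nat.strong_induction_on with
  | _ m IH =>
  rintro i rfl
  have h1 : f i ∈ g '' {j | j ≤ i} := (hsets i) ▸ ⟨i, le_refl i, rfl⟩
  obtain ⟨j, (hj : j ≤ i), hji⟩ := h1
  rcases eq_or_lt_of_le hj with rfl | hlt
  · exact hji.symm
  · have hfj : f j = g j := IH j.val hlt j rfl
    exact absurd (hf (hji.symm.trans hfj.symm)) (Ne.symm (ne_of_lt hlt))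

lemma flag_eq {n : ℕ} {u u' : Fin (n+1) → Fin (n+1) → ℂ}
    (hu : ∀ q, ∃ t, u q = e n t) (hu' : ∀ q, ∃ t, u' q = e n t)
    (hui : Function.Injective u)
    (h : flagOf n u = flagOf n u') : u = u' := by
  classical
  choose f hf using hu
  choose g hg using hu'
  have hue : u = fun q => e n (f q) := funext hf
  have hue' : u' = fun q => e n (g q) := funext hg
  have hfi : Function.Injective f := fun a b hab => hui (by rw [hf a, hf b, hab])
  have hfg : f = g := flag_inj hfi (by rw [← hue, ← hue', h])
  rw [hue, hue', hfg]

lemma star_spec {n : ℕ} {v vs : Fin (n+1) → Fin (n+1) → ℂ}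
    (hv : IsStdForm n v) (hvs : StarPair n v vs) :
    (∀ q, ∃ t, vs q = e n t) ∧ Function.Injective vs := by
  obtain ⟨hli, hform, ⟨p, hp⟩, -, -⟩ := hv
  have hvinj : Function.Injective v := hli.injective
  have hdesc : ∀ q, (vs q = v q ∧ ∃ t, v q = e n t) ∨
      (∃ j, j ≠ Fin.last n ∧ v q = hatE n j ∧ vs q = e n j) := by
    intro q
    rcases hform q with ⟨t, htq⟩ | ⟨j, hj, hjq⟩
    · exact Or.inl ⟨(hvs q).1 ⟨t, htq⟩, t, htq⟩
    · exact Or.inr ⟨j, hj, hjq, (hvs q).2 j hj hjq⟩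
  have hmix : ∀ q q', q ≠ q' → vs q = vs q' →
      (vs q = v q ∧ ∃ t, v q = e n t) →
      (∃ j, j ≠ Fin.last n ∧ v q' = hatE n j ∧ vs q' = e n j) → False := by
    rintro q q' hne heq ⟨h1, t, h2⟩ ⟨j, hj, h3, h4⟩
    have htj : t = j := e_inj n (by rw [← h2, ← h1, heq, h4])
    have hqp : q ≠ p := by
      intro hqp
      rw [hqp, hp] at h2
      have : t = Fin.last n := e_inj n h2.symm
      exact hj (htj ▸ this)
    have hq'p : q' ≠ p := fun h => hatE_ne_e hj (by rw [← h3, h, hp])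
    have hmem : v q' ∈ Submodule.span ℂ (v '' {q, p}) := by
      have hval : v q' = v q + v p := by rw [h3, h2, hp, htj]; rfl
      rw [hval]
      exact Submodule.add_mem _
        (Submodule.subset_span ⟨q, Or.inl rfl, rfl⟩)
        (Submodule.subset_span ⟨p, Or.inr rfl, rfl⟩)
    refine hli.notMem_span_image (x := q') (s := {q, p}) ?_ hmem
    rintro (h | h) <;> [exact hne h.symm; exact hq'p h]
  constructor
  · intro q
    rcases hdesc q with ⟨h1, t, h2⟩ | ⟨j, -, -, h4⟩
    · exact ⟨t, h1.trans h2⟩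
    · exact ⟨j, h4⟩
  · intro q q' heq
    by_cases hne : q = q'
    · exact hne
    exfalso
    rcases hdesc q with hA | hB <;> rcases hdesc q' with hA' | hB'
    · obtain ⟨h1, -, -⟩ := hA; obtain ⟨h1', -, -⟩ := hA'
      exact hne (hvinj (by rw [← h1, ← h1', heq]))
    · exact hmix q q' hne heq hA hB'
    · exact hmix q' q (Ne.symm hne) heq.symm hA' hB
    · obtain ⟨j, hj, h3, h4⟩ := hB; obtain ⟨j', hj', h3', h4'⟩ := hB'
      have : j = j' := e_inj n (by rw [← h4, ← h4', heq])
      exact hne (hvinj (by rw [h3, h3', this]))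

lemma tilde_spec {n : ℕ} {v vt : Fin (n+1) → Fin (n+1) → ℂ}
    (hv : IsStdForm n v) (hvt : TildePair n v vt) :
    (∀ q, ∃ t, vt q = e n t) ∧ Function.Injective vt := by
  obtain ⟨hli, hform, -, -, -⟩ := hv
  have hvinj : Function.Injective v := hli.injective
  rcases hvt with ⟨hall, rfl⟩ | ⟨k, hk, i, j, p, hia, hjm, hhat, hp, hother, ht1, ht2, ht3, ht4⟩
  · exact ⟨hall, hvinj⟩
  have hip : ∀ m : Fin k, i m ≠ p := fun m hmp =>
    hatE_ne_e (hhat m).1 (by rw [← (hhat m).2, hmp, hp])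
  -- class C : positions that are neither hat positions nor p
  have hC : ∀ q, (∀ m, q ≠ i m) → q ≠ p →
      ∃ t, vt q = e n t ∧ v q = e n t ∧ t ≠ Fin.last n ∧ ∀ m : Fin k, t ≠ j m := by
    intro q hq hqp
    obtain ⟨t, htq⟩ := hother q hq
    refine ⟨t, by rw [ht4 q hq hqp, htq], htq, ?_, ?_⟩
    · intro hT; exact hqp (hvinj (by rw [htq, hT, hp]))
    · intro m hT
      have hmem : v (i m) ∈ Submodule.span ℂ (v '' {q, p}) := by
        have hval : v (i m) = v q + v p := by rw [(hhat m).2, htq, hp, hT]; rfl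
        rw [hval]
        exact Submodule.add_mem _
          (Submodule.subset_span ⟨q, Or.inl rfl, rfl⟩)
          (Submodule.subset_span ⟨p, Or.inr rfl, rfl⟩)
      refine hli.notMem_span_image (x := i m) (s := {q, p}) ?_ hmem
      rintro (h | h); exacts [hq m h.symm, hip m h]
  -- class A : hat positions
  have hA : ∀ m : Fin k, ∃ t, vt (i m) = e n t ∧
      ((∃ h : (m:ℕ)+1 < k, t = j ⟨(m:ℕ)+1, h⟩) ∨ ((m:ℕ) = k - 1 ∧ t = Fin.last n)) := by
    intro m
    by_cases h : (m : ℕ) + 1 < k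
    · exact ⟨j ⟨(m:ℕ)+1, h⟩, ht2 m h, Or.inl ⟨h, rfl⟩⟩
    · have hmlt := m.isLt
      have hm : (m : ℕ) = k - 1 := by omega
      have hme : m = ⟨k-1, Nat.sub_lt hk Nat.one_pos⟩ := Fin.ext hm
      exact ⟨Fin.last n, by rw [hme]; exact ht1, Or.inr ⟨hm, rfl⟩⟩
  constructor
  · intro q
    by_cases hq : ∃ m, q = i m
    · obtain ⟨m, rfl⟩ := hq
      obtain ⟨t, h, -⟩ := hA m
      exact ⟨t, h⟩
    · push_neg at hq
      by_cases hqp : q = p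
      · subst hqp; exact ⟨j ⟨0, hk⟩, ht3⟩
      · obtain ⟨t, h, -⟩ := hC q hq hqp
        exact ⟨t, h⟩
  · -- injectivity of vt
    -- first : an A-index can never equal the B-index j 0 nor a C-index
    have hAB : ∀ (m : Fin k) t, vt (i m) = e n t → t ≠ j ⟨0, hk⟩ := by
      intro m t hvtm hT
      obtain ⟨t', ht', hd⟩ := hA m
      have : t = t' := e_inj n (by rw [← hvtm, ← ht'])
      subst this
      rcases hd with ⟨h, rfl⟩ | ⟨-, rfl⟩
      · have := hjm.injective hT
        have : (m:ℕ) + 1 = 0 := congrArg Fin.val this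
        omega
      · exact ((hhat ⟨0, hk⟩).1 hT.symm).elim
    have hAC : ∀ (m : Fin k) t, vt (i m) = e n t →
        t = Fin.last n ∨ ∃ m' : Fin k, t = j m' := by
      intro m t hvtm
      obtain ⟨t', ht', hd⟩ := hA m
      have : t = t' := e_inj n (by rw [← hvtm, ← ht'])
      subst this
      rcases hd with ⟨h, rfl⟩ | ⟨-, rfl⟩
      · exact Or.inr ⟨_, rfl⟩
      · exact Or.inl rfl
    intro q q' heq
    by_cases hne : q = q'
    · exact hne
    exfalso
    by_cases hq : ∃ m, q = i m
    · obtain ⟨m, rfl⟩ := hq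
      obtain ⟨t, hAe, hAd⟩ := hA m
      by_cases hq' : ∃ m', q' = i m'
      · -- A vs A
        obtain ⟨m', rfl⟩ := hq'
        obtain ⟨t', hAe', hAd'⟩ := hA m'
        have htt : t = t' := e_inj n (by rw [← hAe, ← hAe', heq])
        subst htt
        apply hne
        rcases hAd with ⟨h, rfl⟩ | ⟨hm1, rfl⟩ <;> rcases hAd' with ⟨h', he'⟩ | ⟨hm1', he'⟩
        · have hmm := hjm.injective he'
          have hval : (m:ℕ) + 1 = (m':ℕ) + 1 := congrArg Fin.val hmm
          have : m = m' := Fin.ext (by omega)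
          rw [this]
        · exact absurd he' ((hhat _).1)
        · exact absurd he'.symm ((hhat _).1)
        · have : m = m' := Fin.ext (hm1.trans hm1'.symm)
          rw [this]
      · push_neg at hq'
        by_cases hq'p : q' = p
        · -- A vs B
          subst hq'p
          have : t = j ⟨0, hk⟩ := e_inj n (by rw [← hAe, heq, ht3])
          exact hAB m t hAe this
        · -- A vs C
          obtain ⟨t', hCe, -, hCl, hCj⟩ := hC q' hq' hq'p
          have htt : t = t' := e_inj n (by rw [← hAe, ← hCe, heq])
          subst htt
          rcases hAC m t hAe with h | ⟨m', h⟩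
          exacts [hCl h, hCj m' h]
    · push_neg at hq
      by_cases hqp : q = p
      · have heqB : vt p = vt q' := by rw [← hqp, heq]
        by_cases hq' : ∃ m', q' = i m'
        · -- B vs A
          obtain ⟨m', rfl⟩ := hq'
          obtain ⟨t', hAe', -⟩ := hA m'
          have : t' = j ⟨0, hk⟩ := e_inj n (by rw [← hAe', ← heqB, ht3])
          exact hAB m' t' hAe' this
        · push_neg at hq'
          by_cases hq'p : q' = p
          · exact hne (hqp.trans hq'p.symm)
          · -- B vs C
            obtain ⟨t', hCe, -, -, hCj⟩ := hC q' hq' hq'p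
            exact hCj ⟨0, hk⟩ (e_inj n (by rw [← hCe, ← heqB, ht3]))
      · obtain ⟨t, hCe, hCv, hCl, hCj⟩ := hC q hq hqp
        by_cases hq' : ∃ m', q' = i m'
        · -- C vs A
          obtain ⟨m', rfl⟩ := hq'
          obtain ⟨t', hAe', -⟩ := hA m'
          have htt : t' = t := e_inj n (by rw [← hAe', ← hCe, heq])
          rcases hAC m' t' hAe' with h | ⟨m'', h⟩
          exacts [hCl (htt ▸ h : t = Fin.last n), hCj m'' (htt ▸ h)]
        · push_neg at hq'
          by_cases hq'p : q' = p
          · have heqB : vt q = vt p := by rw [← hq'p, heq]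
            exact hCj ⟨0, hk⟩ (e_inj n (by rw [← hCe, heqB, ht3]))
          · -- C vs C
            obtain ⟨t', hCe', hCv', -, -⟩ := hC q' hq' hq'p
            have htt : t = t' := e_inj n (by rw [← hCe, ← hCe', heq])
            exact hne (hvinj (by rw [hCv, hCv', htt]))

lemma recon {n : ℕ} {v vt vs : Fin (n+1) → Fin (n+1) → ℂ}
    (hv : IsStdForm n v) (hvt : TildePair n v vt) (hvs : StarPair n v vs) (q : Fin (n+1)) :
    v q = if vt q = vs q ∨ vs q = e n (Fin.last n) then vs q
          else vs q + e n (Fin.last n) := by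
  classical
  obtain ⟨hli, hform, -, -, -⟩ := hv
  have hvinj : Function.Injective v := hli.injective
  rcases hvt with ⟨hall, hvteq⟩ | ⟨k, hk, i, j, p, hia, hjm, hhat, hp, hother, ht1, ht2, ht3, ht4⟩
  · have hsq : vs q = v q := (hvs q).1 (hall q)
    rw [if_pos (Or.inl (by rw [hvteq, hsq])), hsq]
  by_cases hq : ∃ m, q = i m
  · obtain ⟨m, rfl⟩ := hq
    obtain ⟨hjml, hvim⟩ := hhat m
    have hvsq : vs (i m) = e n (j m) := (hvs (i m)).2 (j m) hjml hvim
    have hcond : ¬(vt (i m) = vs (i m) ∨ vs (i m) = e n (Fin.last n)) := by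
      push_neg
      constructor
      · by_cases h : (m:ℕ)+1 < k
        · rw [ht2 m h, hvsq]
          intro hE
          have hmm := hjm.injective (e_inj n hE)
          have : (m:ℕ) + 1 = (m:ℕ) := congrArg Fin.val hmm
          omega
        · have hmlt := m.isLt
          have hmv : (m : ℕ) = k - 1 := by omega
          have hme : m = (⟨k-1, Nat.sub_lt hk Nat.one_pos⟩ : Fin k) := Fin.ext hmv
          have hvt' : vt (i m) = e n (Fin.last n) := by rw [hme]; exact ht1
          rw [hvt', hvsq]
          exact fun hE => hjml (e_inj n hE).symm
      · rw [hvsq]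
        exact fun hE => hjml (e_inj n hE)
    rw [if_neg hcond, hvsq, hvim]
    rfl
  · push_neg at hq
    by_cases hqp : q = p
    · have hvq : v q = e n (Fin.last n) := by rw [hqp]; exact hp
      have hsq : vs q = v q := (hvs q).1 ⟨_, hvq⟩
      rw [if_pos (Or.inr (hsq.trans hvq)), hsq]
    · obtain ⟨t, htq⟩ := hother q hq
      have hsq : vs q = v q := (hvs q).1 ⟨t, htq⟩
      rw [if_pos (Or.inl (by rw [ht4 q hq hqp, hsq])), hsq]

/-- the map `F ↦ (F̃, F*)` on flags in standard form is injective. -/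
theorem statement4 (n : ℕ) (hn : 1 ≤ n)
    (v w vt vs wt ws : Fin (n + 1) → Fin (n + 1) → ℂ)
    (hv : IsStdForm n v) (hw : IsStdForm n w)
    (hvt : TildePair n v vt) (hvs : StarPair n v vs)
    (hwt : TildePair n w wt) (hws : StarPair n w ws)
    (ht : flagOf n vt = flagOf n wt) (hs : flagOf n vs = flagOf n ws) :
    flagOf n v = flagOf n w := by
  classical
  have hvsspec := star_spec hv hvs
  have hwsspec := star_spec hw hws
  have hvtspec := tilde_spec hv hvt
  have hwtspec := tilde_spec hw hwt
  have hseq : vs = ws := flag_eq hvsspec.1 hwsspec.1 hvsspec.2 hs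
  have hteq : vt = wt := flag_eq hvtspec.1 hwtspec.1 hvtspec.2 ht
  have hvw : v = w := by
    funext q
    rw [recon hv hvt hvs q, recon hw hwt hws q, hseq, hteq]
  rw [hvw]

end ShareshianPairs
end
end
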